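/- arXiv:1601.02275 — 3 statements merged into one kernel-verified Lean document; each statement's English description precedes it below -/
import Mathlib

section
/- Let Γ be a countable discrete group, L : Γ → ℕ a function, and C_n := {γ ∈ Γ : L(γ) = n}. Assume the Jolissaint hypothesis: there exists c > 0 such that for all k, l, m ∈ ℕ and all finitely supported f, g : Γ → ℂ with supp f ⊆ C_k and supp g ⊆ C_l, one has ‖(f*g)·χ_{C_m}‖₂ ≤ c‖f‖₂‖g‖₂ whenever |k−l| ≤ m ≤ k+l, and (f*g)·χ_{C_m} = 0 whenever m < |k−l| or m > k+l. Then there exists C > 0 such that for every k ≥ 1, every m ∈ ℕ, every finitely supported f : Γ → ℂ with supp f ⊆ C_k, and every g ∈ ℓ²(Γ): ‖(f*g)·χ_{C_m}‖₂ ≤ C · k^{1/2} · ‖f‖₂ · (Σ_{l=0}^{2·min(k,m)} ‖g·χ_{C_{m+k−l}}‖₂²)^{1/2}. -/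
open scoped ENNReal

/-- The ℓ² norm of a function on a discrete group. -/
noncomputable def l2norm {Γ : Type*} (h : Γ → ℂ) : ℝ :=
  (∑' γ, ‖h γ‖ ^ 2) ^ (1/2 : ℝ)

/-- Convolution of functions on a group: `(f*g)(γ) = ∑ₛ f(s) g(s⁻¹γ)`. -/
noncomputable def conv {Γ : Type*} [Group Γ] (f g : Γ → ℂ) : Γ → ℂ :=
  fun γ => ∑' s, f s * g (s⁻¹ * γ)

/-- Pointwise product of `h` with the characteristic function of `A`. -/
noncomputable def restrict {Γ : Type*} (h : Γ → ℂ) (A : Set Γ) : Γ → ℂ :=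
  fun γ => A.indicator h γ

section AuxBasic
variable {Γ : Type*}

private lemma rpow_two_eq (h : Γ → ℂ) :
    (fun γ => ‖h γ‖ ^ ((2:ℝ≥0∞)).toReal) = (fun γ => ‖h γ‖ ^ 2) := by
  funext γ
  rw [show ((2:ℝ≥0∞)).toReal = ((2:ℕ):ℝ) by simp, Real.rpow_natCast]

/-- Package an ℓ²-summable function as an element of the `lp` space. -/
noncomputable def toLp (h : Γ → ℂ) (hh : Summable fun γ => ‖h γ‖ ^ 2) :
    lp (fun _ : Γ => ℂ) 2 :=
  ⟨h, memℓp_gen (by rw [rpow_two_eq]; exact hh)⟩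

@[simp] lemma coe_toLp (h : Γ → ℂ) (hh) : (toLp h hh : Γ → ℂ) = h := rfl

lemma sq_of_mem (G : lp (fun _ : Γ => ℂ) 2) : Summable fun γ => ‖G γ‖ ^ 2 := by
  have := G.2.summable (p := 2) (by norm_num)
  exact this.congr fun γ => congrFun (rpow_two_eq (G : Γ → ℂ)) γ

lemma l2norm_coe' (G : lp (fun _ : Γ => ℂ) 2) :
    (∑' γ, ‖G γ‖ ^ 2) ^ (1/2 : ℝ) = ‖G‖ := by
  rw [lp.norm_eq_tsum_rpow (by norm_num : 0 < (2:ℝ≥0∞).toReal)]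
  have := congrFun (rpow_two_eq (G : Γ → ℂ))
  norm_num [this]

lemma l2norm_toLp (h : Γ → ℂ) (hh : Summable fun γ => ‖h γ‖ ^ 2) :
    l2norm h = ‖toLp h hh‖ := by
  rw [← l2norm_coe' (toLp h hh), coe_toLp]; rfl

lemma l2norm_coe (G : lp (fun _ : Γ => ℂ) 2) : l2norm (G : Γ → ℂ) = ‖G‖ :=
  l2norm_coe' G

lemma l2norm_nonneg (h : Γ → ℂ) : 0 ≤ l2norm h :=
  Real.rpow_nonneg (tsum_nonneg fun _ => sq_nonneg _) _

lemma sq_summable_mono {a b : Γ → ℂ} (hb : Summable fun γ => ‖b γ‖ ^ 2)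
    (hab : ∀ γ, ‖a γ‖ ≤ ‖b γ‖) : Summable fun γ => ‖a γ‖ ^ 2 :=
  hb.of_nonneg_of_le (fun _ => sq_nonneg _)
    (fun γ => pow_le_pow_left₀ (norm_nonneg _) (hab γ) 2)

lemma l2norm_le_of_le {a b : Γ → ℂ} (hb : Summable fun γ => ‖b γ‖ ^ 2)
    (hab : ∀ γ, ‖a γ‖ ≤ ‖b γ‖) : l2norm a ≤ l2norm b :=
  Real.rpow_le_rpow (tsum_nonneg fun _ => sq_nonneg _)
    (Summable.tsum_le_tsum (fun γ => pow_le_pow_left₀ (norm_nonneg _) (hab γ) 2)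
      (sq_summable_mono hb hab) hb) (by norm_num)

lemma norm_restrict_le (h : Γ → ℂ) (A : Set Γ) (γ : Γ) :
    ‖restrict h A γ‖ ≤ ‖h γ‖ :=
  norm_indicator_le_norm_self h γ

lemma restrict_summable {h : Γ → ℂ} (hh : Summable fun γ => ‖h γ‖ ^ 2) (A : Set Γ) :
    Summable fun γ => ‖restrict h A γ‖ ^ 2 :=
  sq_summable_mono hh (norm_restrict_le h A)

lemma l2norm_restrict_le {h : Γ → ℂ} (hh : Summable fun γ => ‖h γ‖ ^ 2) (A : Set Γ) :
    l2norm (restrict h A) ≤ l2norm h :=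
  l2norm_le_of_le hh (norm_restrict_le h A)

lemma l2norm_add_le {a b : Γ → ℂ} (ha : Summable fun γ => ‖a γ‖ ^ 2)
    (hb : Summable fun γ => ‖b γ‖ ^ 2) :
    l2norm (fun γ => a γ + b γ) ≤ l2norm a + l2norm b := by
  have hco : (fun γ => a γ + b γ) =
      ((toLp a ha + toLp b hb : lp (fun _ : Γ => ℂ) 2) : Γ → ℂ) := by
    funext γ; rw [lp.coeFn_add]; rfl
  rw [hco, l2norm_coe, l2norm_toLp a ha, l2norm_toLp b hb]
  exact norm_add_le _ _

lemma fin_supp_summable {f : Γ → ℂ} (hf : (Function.support f).Finite) :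
    Summable fun γ => ‖f γ‖ ^ 2 := by
  apply summable_of_ne_finset_zero (s := hf.toFinset)
  intro b hb
  have : f b = 0 := by
    by_contra hb'
    exact hb (hf.mem_toFinset.2 hb')
  simp [this]

end AuxBasic

section AuxConv
variable {Γ : Type*} [Group Γ]

lemma trans_summable {s : Γ} {F : Γ → ℝ} (hF : Summable F) :
    Summable fun γ => F (s⁻¹ * γ) := by
  have : (fun γ => F (s⁻¹ * γ)) = F ∘ (Equiv.mulLeft s⁻¹) := by funext γ; simp
  rw [this, Equiv.summable_iff]; exact hF

lemma trans_tsum (s : Γ) (F : Γ → ℝ) : ∑' γ, F (s⁻¹ * γ) = ∑' γ, F γ := by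
  simpa using (Equiv.mulLeft s⁻¹).tsum_eq F

/-- Left translation as an operation on ℓ². -/
noncomputable def translp (s : Γ) (G : lp (fun _ : Γ => ℂ) 2) : lp (fun _ : Γ => ℂ) 2 :=
  toLp (fun γ => G (s⁻¹ * γ))
    (trans_summable (s := s) (F := fun γ => ‖G γ‖ ^ 2) (sq_of_mem G))

@[simp] lemma translp_coe (s : Γ) (G : lp (fun _ : Γ => ℂ) 2) (γ : Γ) :
    translp s G γ = G (s⁻¹ * γ) := rfl

lemma norm_translp (s : Γ) (G : lp (fun _ : Γ => ℂ) 2) : ‖translp s G‖ = ‖G‖ := by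
  rw [← l2norm_coe' (translp s G), ← l2norm_coe' G]
  congr 1
  exact trans_tsum s (fun γ => ‖G γ‖ ^ 2)

/-- Convolution by a finitely supported function, on the level of ℓ². -/
noncomputable def convLp {f : Γ → ℂ} (hf : (Function.support f).Finite)
    (G : lp (fun _ : Γ => ℂ) 2) : lp (fun _ : Γ => ℂ) 2 :=
  ∑ s ∈ hf.toFinset, f s • translp s G

lemma conv_eq_sum {f : Γ → ℂ} (hf : (Function.support f).Finite) (g : Γ → ℂ) (γ : Γ) :
    conv f g γ = ∑ s ∈ hf.toFinset, f s * g (s⁻¹ * γ) := by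
  apply tsum_eq_sum
  intro b hb
  have : f b = 0 := by
    by_contra hb'
    exact hb (hf.mem_toFinset.2 hb')
  simp [this]

lemma convLp_coe {f : Γ → ℂ} (hf : (Function.support f).Finite)
    (G : lp (fun _ : Γ => ℂ) 2) (γ : Γ) :
    convLp hf G γ = conv f (G : Γ → ℂ) γ := by
  rw [conv_eq_sum hf, convLp, lp.coeFn_sum]
  simp [smul_eq_mul]

lemma conv_sq_summable {f : Γ → ℂ} (hf : (Function.support f).Finite)
    {g : Γ → ℂ} (hg : Summable fun γ => ‖g γ‖ ^ 2) :
    Summable fun γ => ‖conv f g γ‖ ^ 2 := by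
  have h1 : ∀ γ, conv f g γ = convLp hf (toLp g hg) γ := by
    intro γ; rw [convLp_coe hf (toLp g hg) γ, coe_toLp]
  have := sq_of_mem (convLp hf (toLp g hg))
  apply this.congr
  intro γ; rw [h1 γ]

lemma l2norm_conv_le {f : Γ → ℂ} (hf : (Function.support f).Finite)
    {g : Γ → ℂ} (hg : Summable fun γ => ‖g γ‖ ^ 2) :
    l2norm (conv f g) ≤ (∑ s ∈ hf.toFinset, ‖f s‖) * l2norm g := by
  have h1 : conv f g = ((convLp hf (toLp g hg) : lp (fun _ : Γ => ℂ) 2) : Γ → ℂ) := by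
    funext γ; rw [convLp_coe hf (toLp g hg) γ, coe_toLp]
  rw [h1, l2norm_coe, l2norm_toLp g hg]
  refine (norm_sum_le _ _).trans ?_
  rw [Finset.sum_mul]
  apply Finset.sum_le_sum
  intro s _
  rw [norm_smul, norm_translp]

/-- Triangle inequality for finite sums in the bespoke l2 norm. -/
lemma l2norm_sum_le {ι : Type*} (J : Finset ι) (h : ι → Γ → ℂ)
    (hh : ∀ j, Summable fun γ => ‖h j γ‖ ^ 2) :
    l2norm (fun γ => ∑ j ∈ J, h j γ) ≤ ∑ j ∈ J, l2norm (h j) := by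
  have hcoe : (fun γ => ∑ j ∈ J, h j γ) =
      ((∑ j ∈ J, toLp (h j) (hh j) : lp (fun _ : Γ => ℂ) 2) : Γ → ℂ) := by
    funext γ; rw [lp.coeFn_sum]; simp
  rw [hcoe, l2norm_coe]
  refine (norm_sum_le _ _).trans ?_
  apply Finset.sum_le_sum
  intro j _
  rw [l2norm_toLp (h j) (hh j)]

end AuxConv

section ExtJol
variable {Γ : Type*} [Group Γ]

/-- Extension of the Jolissaint inequality from finitely supported `g` to ℓ² `g`. -/
lemma ext_jol (C : ℕ → Set Γ) {c : ℝ} (hc : 0 < c)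
    (hJ : ∀ (k l m : ℕ) (f g : Γ → ℂ),
      (Function.support f).Finite → Function.support f ⊆ C k →
      (Function.support g).Finite → Function.support g ⊆ C l →
      ((((k : ℤ) - l).natAbs ≤ m ∧ m ≤ k + l →
          l2norm (restrict (conv f g) (C m)) ≤ c * l2norm f * l2norm g) ∧
        (m < ((k : ℤ) - l).natAbs ∨ k + l < m →
          restrict (conv f g) (C m) = 0)))
    (k l m : ℕ) (f g : Γ → ℂ) (hf : (Function.support f).Finite)
    (hfs : Function.support f ⊆ C k) (hg : Summable fun γ => ‖g γ‖ ^ 2)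
    (hgs : Function.support g ⊆ C l)
    (hm : ((k : ℤ) - l).natAbs ≤ m ∧ m ≤ k + l) :
    l2norm (restrict (conv f g) (C m)) ≤ c * l2norm f * l2norm g := by
  refine le_of_forall_pos_le_add ?_
  intro ε hε
  set M : ℝ := (∑ s ∈ hf.toFinset, ‖f s‖) + 1 with hMdef
  have hM : 0 < M := by
    have : (0:ℝ) ≤ ∑ s ∈ hf.toFinset, ‖f s‖ :=
      Finset.sum_nonneg fun _ _ => norm_nonneg _
    linarith
  -- choose a finite set S capturing all but (ε/M)² of the mass of g
  have htt := tendsto_tsum_compl_atTop_zero (fun γ => ‖g γ‖ ^ 2)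
  have hδ : (0:ℝ) < (ε / M) ^ 2 := by positivity
  have hev := (Metric.tendsto_nhds.mp htt _ hδ).exists
  obtain ⟨S, hS⟩ := hev
  rw [Real.dist_eq, sub_zero] at hS
  set g1 := restrict g ↑S with hg1def
  set g2 := restrict g ((↑S : Set Γ)ᶜ) with hg2def
  have hgsplit : ∀ γ, g1 γ + g2 γ = g γ := fun γ =>
    congrFun (Set.indicator_self_add_compl (↑S : Set Γ) g) γ
  have hg1sum : Summable fun γ => ‖g1 γ‖ ^ 2 := restrict_summable hg _
  have hg2sum : Summable fun γ => ‖g2 γ‖ ^ 2 := restrict_summable hg _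
  have hg1fin : (Function.support g1).Finite :=
    Set.Finite.subset S.finite_toSet Set.support_indicator_subset
  have hsub : ∀ (A : Set Γ), Function.support (restrict g A) ⊆ C l := by
    intro A γ hγ
    apply hgs
    rw [Function.mem_support] at hγ ⊢
    intro h0
    exact hγ (Set.indicator_apply_eq_zero.2 fun _ => h0)
  -- split the convolution
  have hsplit : restrict (conv f g) (C m) =
      fun γ => restrict (conv f g1) (C m) γ + restrict (conv f g2) (C m) γ := by
    funext γ
    have hcv : conv f g γ = conv f g1 γ + conv f g2 γ := by
      rw [conv_eq_sum hf, conv_eq_sum hf, conv_eq_sum hf, ← Finset.sum_add_distrib]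
      apply Finset.sum_congr rfl
      intro s _
      rw [← mul_add, hgsplit]
    simp only [restrict]
    by_cases hγ : γ ∈ C m
    · rw [Set.indicator_of_mem hγ, Set.indicator_of_mem hγ, Set.indicator_of_mem hγ, hcv]
    · rw [Set.indicator_of_notMem hγ, Set.indicator_of_notMem hγ,
        Set.indicator_of_notMem hγ, add_zero]
  have sq1 : Summable fun γ => ‖restrict (conv f g1) (C m) γ‖ ^ 2 :=
    restrict_summable (conv_sq_summable hf hg1sum) _
  have sq2 : Summable fun γ => ‖restrict (conv f g2) (C m) γ‖ ^ 2 :=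
    restrict_summable (conv_sq_summable hf hg2sum) _
  have tri : l2norm (restrict (conv f g) (C m)) ≤
      l2norm (restrict (conv f g1) (C m)) + l2norm (restrict (conv f g2) (C m)) := by
    rw [hsplit]
    exact l2norm_add_le sq1 sq2
  -- first piece: finitely supported, apply the hypothesis
  have h1 : l2norm (restrict (conv f g1) (C m)) ≤ c * l2norm f * l2norm g := by
    refine le_trans ((hJ k l m f g1 hf hfs hg1fin (hsub _)).1 hm) ?_
    have : l2norm g1 ≤ l2norm g := l2norm_restrict_le hg _
    have h0 : 0 ≤ c * l2norm f := mul_nonneg hc.le (l2norm_nonneg f)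
    exact mul_le_mul_of_nonneg_left this h0
  -- second piece: small tail
  have hg2small : l2norm g2 ≤ ε / M := by
    have hid : (∑' γ, ‖g2 γ‖ ^ 2) = ∑' (a : {x // x ∉ S}), ‖g ↑a‖ ^ 2 := by
      have h1 : ∀ γ, ‖g2 γ‖ ^ 2 =
          ((↑S : Set Γ)ᶜ).indicator (fun γ => ‖g γ‖ ^ 2) γ := by
        intro γ
        by_cases h : γ ∈ ((↑S : Set Γ)ᶜ)
        · rw [Set.indicator_of_mem h]
          simp only [hg2def, restrict, Set.indicator_of_mem h]
        · rw [Set.indicator_of_notMem h]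
          simp only [hg2def, restrict, Set.indicator_of_notMem h]
          simp
      rw [tsum_congr h1, ← tsum_subtype]
      exact ((Equiv.subtypeEquivRight (p := fun x => x ∉ S)
        (q := fun x => x ∈ ((↑S : Set Γ)ᶜ)) (fun x => Iff.rfl)).tsum_eq
        (fun x : ((↑S : Set Γ)ᶜ : Set Γ) => ‖g ↑x‖ ^ 2)).symm
    have htail : (∑' γ, ‖g2 γ‖ ^ 2) < (ε / M) ^ 2 := by
      rw [hid]
      exact lt_of_le_of_lt (le_abs_self _) hS
    have : l2norm g2 ≤ ((ε / M) ^ 2) ^ (1/2 : ℝ) :=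
      Real.rpow_le_rpow (tsum_nonneg fun _ => sq_nonneg _) htail.le (by norm_num)
    refine this.trans_eq ?_
    rw [← Real.rpow_natCast (ε / M) 2, ← Real.rpow_mul (by positivity)]
    norm_num
  have h2 : l2norm (restrict (conv f g2) (C m)) ≤ ε := by
    refine le_trans (l2norm_restrict_le (conv_sq_summable hf hg2sum) _) ?_
    refine le_trans (l2norm_conv_le hf hg2sum) ?_
    have hb : (∑ s ∈ hf.toFinset, ‖f s‖) ≤ M := by simp [hMdef]
    calc (∑ s ∈ hf.toFinset, ‖f s‖) * l2norm g2
        ≤ M * (ε / M) := by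
          apply mul_le_mul hb hg2small (l2norm_nonneg _) hM.le
      _ = ε := by field_simp
  linarith
end ExtJol

theorem stmt0 {Γ : Type*} [Group Γ] [Countable Γ] (L : Γ → ℕ)
    (C : ℕ → Set Γ) (hC : ∀ n, C n = {γ : Γ | L γ = n})
    (hJol : ∃ c > (0 : ℝ), ∀ (k l m : ℕ) (f g : Γ → ℂ),
      (Function.support f).Finite → Function.support f ⊆ C k →
      (Function.support g).Finite → Function.support g ⊆ C l →
      ((((k : ℤ) - l).natAbs ≤ m ∧ m ≤ k + l →
          l2norm (restrict (conv f g) (C m)) ≤ c * l2norm f * l2norm g) ∧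
        (m < ((k : ℤ) - l).natAbs ∨ k + l < m →
          restrict (conv f g) (C m) = 0))) :
    ∃ C' > (0 : ℝ), ∀ (k : ℕ), 1 ≤ k → ∀ (m : ℕ) (f g : Γ → ℂ),
      (Function.support f).Finite → Function.support f ⊆ C k →
      Summable (fun γ => ‖g γ‖ ^ 2) →
      l2norm (restrict (conv f g) (C m)) ≤
        C' * (k : ℝ) ^ (1/2 : ℝ) * l2norm f *
          (∑ l ∈ Finset.range (2 * min k m + 1),
            l2norm (restrict g (C (m + k - l))) ^ 2) ^ (1/2 : ℝ) := by
  classical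
  obtain ⟨c, hc, hJ⟩ := hJol
  refine ⟨c * (3:ℝ) ^ (1/2 : ℝ), by positivity, ?_⟩
  intro k hk m f g hf hfs hg
  -- Step A : decomposition of the convolution according to the length of g's argument
  have hkey : restrict (conv f g) (C m) =
      fun γ => ∑ j ∈ Finset.range (2 * min k m + 1),
        restrict (conv f (restrict g (C (m + k - j)))) (C m) γ := by
    funext γ
    by_cases hγm : γ ∈ C m
    · show (C m).indicator (conv f g) γ = _
      rw [Set.indicator_of_mem hγm]
      have hterm : ∀ j ∈ Finset.range (2 * min k m + 1),
          restrict (conv f (restrict g (C (m + k - j)))) (C m) γ =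
          ∑ s ∈ hf.toFinset, f s * restrict g (C (m + k - j)) (s⁻¹ * γ) := by
        intro j _
        show (C m).indicator _ γ = _
        rw [Set.indicator_of_mem hγm]
        exact conv_eq_sum hf _ γ
      rw [conv_eq_sum hf, Finset.sum_congr rfl hterm, Finset.sum_comm]
      apply Finset.sum_congr rfl
      intro s hs
      rw [← Finset.mul_sum]
      congr 1
      set t := s⁻¹ * γ with ht
      have hsk : L s = k := by
        have := hfs (hf.mem_toFinset.1 hs); rwa [hC] at this
      have hγm' : L γ = m := by rw [hC] at hγm; exact hγm
      by_cases hgt : g t = 0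
      · rw [hgt]
        symm
        apply Finset.sum_eq_zero
        intro j _
        exact Set.indicator_apply_eq_zero.2 fun _ => hgt
      · -- delta-function argument: L t must lie in the admissible window
        have hrange : ((k:ℤ) - (L t : ℤ)).natAbs ≤ m ∧ m ≤ k + L t := by
          by_contra hcon
          have hcon' : m < ((k:ℤ) - (L t : ℤ)).natAbs ∨ k + L t < m := by omega
          set δs : Γ → ℂ := fun x => if x = s then 1 else 0 with hδs
          set δt : Γ → ℂ := fun x => if x = t then 1 else 0 with hδt
          have hsupδs : Function.support δs ⊆ {s} := by
            intro x hx
            rw [Function.mem_support] at hx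
            by_contra hxs
            have hxs' : x ≠ s := by simpa using hxs
            exact hx (by simp [hδs, hxs'])
          have hsupδt : Function.support δt ⊆ {t} := by
            intro x hx
            rw [Function.mem_support] at hx
            by_contra hxt
            have hxt' : x ≠ t := by simpa using hxt
            exact hx (by simp [hδt, hxt'])
          have hδsfin : (Function.support δs).Finite :=
            Set.Finite.subset (Set.finite_singleton s) hsupδs
          have hδtfin : (Function.support δt).Finite :=
            Set.Finite.subset (Set.finite_singleton t) hsupδt
          have hδsC : Function.support δs ⊆ C k := by
            intro x hx
            have : x = s := hsupδs hx
            subst this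
            rw [hC]; exact hsk
          have hδtC : Function.support δt ⊆ C (L t) := by
            intro x hx
            have : x = t := hsupδt hx
            subst this
            rw [hC]; rfl
          have vanish := (hJ k (L t) m δs δt hδsfin hδsC hδtfin hδtC).2 hcon'
          have hconv1 : conv δs δt γ = 1 := by
            show (∑' u, δs u * δt (u⁻¹ * γ)) = 1
            rw [tsum_eq_single s (by intro u hu; simp [hδs, hu])]
            simp [hδs, hδt, ← ht]
          have h0 : restrict (conv δs δt) (C m) γ = 0 := by rw [vanish]; rfl
          have h1 : restrict (conv δs δt) (C m) γ = 1 := by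
            show (C m).indicator (conv δs δt) γ = 1
            rw [Set.indicator_of_mem hγm, hconv1]
          rw [h1] at h0
          exact one_ne_zero h0
        -- exactly one summand survives
        have hj0 : m + k - L t ∈ Finset.range (2 * min k m + 1) := by
          rw [Finset.mem_range]
          omega
        rw [Finset.sum_eq_single (m + k - L t)]
        · symm
          apply Set.indicator_of_mem
          rw [hC]
          show L t = m + k - (m + k - L t)
          omega
        · intro j hjJ hjne
          have hjn : j < 2 * min k m + 1 := Finset.mem_range.1 hjJ
          apply Set.indicator_of_notMem
          rw [hC]
          intro hmem
          have : L t = m + k - j := hmem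
          omega
        · intro hnot; exact absurd hj0 hnot
    · show (C m).indicator (conv f g) γ = _
      rw [Set.indicator_of_notMem hγm]
      symm
      apply Finset.sum_eq_zero
      intro j _
      exact Set.indicator_of_notMem hγm _
  -- summability facts
  have sqgj : ∀ j : ℕ, Summable fun γ => ‖restrict g (C (m + k - j)) γ‖ ^ 2 :=
    fun j => restrict_summable hg _
  have sqterm : ∀ j : ℕ,
      Summable fun γ => ‖restrict (conv f (restrict g (C (m + k - j)))) (C m) γ‖ ^ 2 :=
    fun j => restrict_summable (conv_sq_summable hf (sqgj j)) _
  -- Step B : triangle inequality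
  have hB : l2norm (restrict (conv f g) (C m)) ≤
      ∑ j ∈ Finset.range (2 * min k m + 1),
        l2norm (restrict (conv f (restrict g (C (m + k - j)))) (C m)) := by
    rw [hkey]
    exact l2norm_sum_le _ _ sqterm
  -- Step C : apply the (extended) Jolissaint inequality to each piece
  have hCstep : ∀ j ∈ Finset.range (2 * min k m + 1),
      l2norm (restrict (conv f (restrict g (C (m + k - j)))) (C m)) ≤
        c * l2norm f * l2norm (restrict g (C (m + k - j))) := by
    intro j hj
    have hjn : j < 2 * min k m + 1 := Finset.mem_range.1 hj
    apply ext_jol C hc hJ k (m + k - j) m f _ hf hfs (sqgj j)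
    · exact fun γ hγ => by
        have := Set.support_indicator_subset (f := g) (s := C (m + k - j)) hγ
        exact this
    · constructor <;> omega
  have hsum : ∑ j ∈ Finset.range (2 * min k m + 1),
      l2norm (restrict (conv f (restrict g (C (m + k - j)))) (C m)) ≤
      c * l2norm f * ∑ j ∈ Finset.range (2 * min k m + 1),
        l2norm (restrict g (C (m + k - j))) := by
    rw [Finset.mul_sum]
    exact Finset.sum_le_sum fun j hj => by
      have := hCstep j hj
      linarith [this]
  -- Step D : Cauchy–Schwarz on the finite sum
  have hanneg : ∀ j ∈ Finset.range (2 * min k m + 1),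
      (0:ℝ) ≤ l2norm (restrict g (C (m + k - j))) := fun j _ => l2norm_nonneg _
  have hsnn : (0:ℝ) ≤ ∑ j ∈ Finset.range (2 * min k m + 1),
      l2norm (restrict g (C (m + k - j))) := Finset.sum_nonneg hanneg
  have hsqnn : (0:ℝ) ≤ ∑ j ∈ Finset.range (2 * min k m + 1),
      l2norm (restrict g (C (m + k - j))) ^ 2 :=
    Finset.sum_nonneg fun j _ => sq_nonneg _
  have hCS : ∑ j ∈ Finset.range (2 * min k m + 1),
      l2norm (restrict g (C (m + k - j))) ≤
      ((2 * min k m + 1 : ℕ) : ℝ) ^ (1/2:ℝ) *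
        (∑ j ∈ Finset.range (2 * min k m + 1),
          l2norm (restrict g (C (m + k - j))) ^ 2) ^ (1/2:ℝ) := by
    have h1 : (∑ j ∈ Finset.range (2 * min k m + 1),
        l2norm (restrict g (C (m + k - j)))) ^ 2 ≤
        ((2 * min k m + 1 : ℕ) : ℝ) * ∑ j ∈ Finset.range (2 * min k m + 1),
          l2norm (restrict g (C (m + k - j))) ^ 2 := by
      have := sq_sum_le_card_mul_sum_sq
        (s := Finset.range (2 * min k m + 1))
        (f := fun j => l2norm (restrict g (C (m + k - j))))
      simpa using this
    calc ∑ j ∈ Finset.range (2 * min k m + 1), l2norm (restrict g (C (m + k - j)))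
        = ((∑ j ∈ Finset.range (2 * min k m + 1),
            l2norm (restrict g (C (m + k - j)))) ^ 2) ^ (1/2:ℝ) := by
          rw [← Real.rpow_natCast (∑ j ∈ Finset.range (2 * min k m + 1),
            l2norm (restrict g (C (m + k - j)))) 2, ← Real.rpow_mul hsnn]
          norm_num
      _ ≤ (((2 * min k m + 1 : ℕ) : ℝ) * ∑ j ∈ Finset.range (2 * min k m + 1),
            l2norm (restrict g (C (m + k - j))) ^ 2) ^ (1/2:ℝ) :=
          Real.rpow_le_rpow (sq_nonneg _) h1 (by norm_num)
      _ = _ := Real.mul_rpow (Nat.cast_nonneg _) hsqnn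
  have hck : (((2 * min k m + 1 : ℕ)) : ℝ) ^ (1/2:ℝ) ≤
      (3:ℝ) ^ (1/2:ℝ) * ((k:ℝ)) ^ (1/2:ℝ) := by
    rw [← Real.mul_rpow (by norm_num) (Nat.cast_nonneg k)]
    apply Real.rpow_le_rpow (Nat.cast_nonneg _) _ (by norm_num)
    have h3 : (2 * min k m + 1 : ℕ) ≤ 3 * k := by omega
    calc ((2 * min k m + 1 : ℕ) : ℝ) ≤ ((3 * k : ℕ) : ℝ) := by exact_mod_cast h3
      _ = 3 * (k:ℝ) := by push_cast; ring
  have hcf : (0:ℝ) ≤ c * l2norm f := mul_nonneg hc.le (l2norm_nonneg f)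
  calc l2norm (restrict (conv f g) (C m))
      ≤ c * l2norm f * ∑ j ∈ Finset.range (2 * min k m + 1),
          l2norm (restrict g (C (m + k - j))) := hB.trans hsum
    _ ≤ c * l2norm f * (((2 * min k m + 1 : ℕ) : ℝ) ^ (1/2:ℝ) *
          (∑ j ∈ Finset.range (2 * min k m + 1),
            l2norm (restrict g (C (m + k - j))) ^ 2) ^ (1/2:ℝ)) :=
        mul_le_mul_of_nonneg_left hCS hcf
    _ ≤ c * l2norm f * (((3:ℝ) ^ (1/2:ℝ) * ((k:ℝ)) ^ (1/2:ℝ)) *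
          (∑ j ∈ Finset.range (2 * min k m + 1),
            l2norm (restrict g (C (m + k - j))) ^ 2) ^ (1/2:ℝ)) := by
        apply mul_le_mul_of_nonneg_left _ hcf
        exact mul_le_mul_of_nonneg_right hck (Real.rpow_nonneg hsqnn _)
    _ = c * (3:ℝ) ^ (1/2:ℝ) * (k:ℝ) ^ (1/2:ℝ) * l2norm f *
          (∑ j ∈ Finset.range (2 * min k m + 1),
            l2norm (restrict g (C (m + k - j))) ^ 2) ^ (1/2:ℝ) := by ring
end

section
/- Let (Z, d) be a separable metric space and let μ be a finite Borel measure on Z. Then the closure in L²(Z, μ; ℂ) of the linear span of the set of indicator functions {χ_B : B ⊆ Z Borel, μ(frontier B) = 0} is equal to all of L²(Z, μ; ℂ). -/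
open MeasureTheory

open Metric Filter Set ENNReal symmDiff
theorem stmt5 {Z : Type*} [MetricSpace Z] [TopologicalSpace.SeparableSpace Z]
    [MeasurableSpace Z] [BorelSpace Z] (μ : Measure Z) [IsFiniteMeasure μ] :
    (Submodule.span ℂ
        {f : Lp ℂ 2 μ | ∃ (B : Set Z) (hB : MeasurableSet B) (hμB : μ B ≠ ⊤),
          μ (frontier B) = 0 ∧
            f = indicatorConstLp 2 hB hμB (1 : ℂ)}).topologicalClosure = ⊤ := by
  set S := (Submodule.span ℂ
        {f : Lp ℂ 2 μ | ∃ (B : Set Z) (hB : MeasurableSet B) (hμB : μ B ≠ ⊤),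
          μ (frontier B) = 0 ∧
            f = indicatorConstLp 2 hB hμB (1 : ℂ)}).topologicalClosure with hSdef
  have hSclosed : IsClosed (S : Set (Lp ℂ 2 μ)) := (Submodule.span ℂ _).isClosed_topologicalClosure
  have h2top : (2 : ℝ≥0∞) ≠ ∞ := by norm_num
  -- generators are in S
  have hgen : ∀ (B : Set Z) (hB : MeasurableSet B), μ (frontier B) = 0 →
      indicatorConstLp 2 hB (measure_ne_top μ B) (1 : ℂ) ∈ S := by
    intro B hB h0
    exact Submodule.le_topologicalClosure _
      (Submodule.subset_span ⟨B, hB, measure_ne_top μ B, h0, rfl⟩)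
  -- limit lemma
  have key : ∀ (s : Set Z) (hs : MeasurableSet s) (t : ℕ → Set Z)
      (ht : ∀ n, MeasurableSet (t n)),
      (∀ n, indicatorConstLp 2 (ht n) (measure_ne_top μ (t n)) (1 : ℂ) ∈ S) →
      Tendsto (fun n => μ (t n ∆ s)) atTop (nhds 0) →
      indicatorConstLp 2 hs (measure_ne_top μ s) (1 : ℂ) ∈ S := by
    intro s hs t ht hmem htend
    have hlim := tendsto_indicatorConstLp_set (c := (1 : ℂ)) (hs := hs)
      (hμs := measure_ne_top μ s) (ht := ht) (hμt := fun n => measure_ne_top μ (t n)) h2top htend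
    exact hSclosed.mem_of_tendsto hlim (Filter.Eventually.of_forall hmem)
  -- indicators of closed sets are in S
  have hclosed : ∀ (F : Set Z) (hF : IsClosed F),
      indicatorConstLp 2 hF.measurableSet (measure_ne_top μ F) (1 : ℂ) ∈ S := by
    intro F hF
    obtain ⟨rs, rs_lim, hrs⟩ := exists_null_frontiers_thickening μ F
    refine key F hF.measurableSet (fun n => thickening (rs n) F)
      (fun n => isOpen_thickening.measurableSet) (fun n => hgen _ _ (hrs n).2) ?_
    have hsub : ∀ n, F ⊆ thickening (rs n) F := fun n => self_subset_thickening (hrs n).1 F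
    have heq : ∀ n, μ (thickening (rs n) F ∆ F) = μ (thickening (rs n) F) - μ F := by
      intro n
      rw [symmDiff_of_ge (hsub n)]
      exact measure_diff (hsub n) hF.measurableSet.nullMeasurableSet (measure_ne_top μ F)
    simp only [heq]
    have hth : Tendsto (fun n => μ (thickening (rs n) F)) atTop (nhds (μ F)) := by
      refine (tendsto_measure_thickening_of_isClosed
        ⟨1, one_pos, measure_ne_top μ _⟩ hF).comp ?_
      exact tendsto_nhdsWithin_of_tendsto_nhds_of_eventually_within _ rs_lim
        (Filter.Eventually.of_forall fun n => (hrs n).1)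
    have := ENNReal.Tendsto.sub hth tendsto_const_nhds (Or.inr (measure_ne_top μ F))
    simpa using this
  -- indicators of all measurable sets are in S
  have hmeas : ∀ (s : Set Z) (hs : MeasurableSet s),
      indicatorConstLp 2 hs (measure_ne_top μ s) (1 : ℂ) ∈ S := by
    intro s hs
    have hεne : ∀ n : ℕ, (((n : ℝ≥0∞) + 1)⁻¹ : ℝ≥0∞) ≠ 0 := by
      intro n
      simp [ENNReal.inv_ne_zero, ENNReal.add_ne_top]
    choose F hFs hFcl hFlt using fun n : ℕ =>
      hs.exists_isClosed_diff_lt (measure_ne_top μ s) (hεne n)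
    refine key s hs F (fun n => (hFcl n).measurableSet) (fun n => hclosed _ (hFcl n)) ?_
    have hinv : Tendsto (fun n : ℕ => ((n : ℝ≥0∞) + 1)⁻¹) atTop (nhds 0) := by
      have := ENNReal.tendsto_inv_nat_nhds_zero.comp (tendsto_add_atTop_nat 1)
      refine this.congr fun n => ?_
      simp [Function.comp]
    refine tendsto_of_tendsto_of_tendsto_of_le_of_le tendsto_const_nhds hinv
      (fun n => zero_le) (fun n => ?_)
    rw [symmDiff_of_le (hFs n)]
    exact (hFlt n).le
  -- conclude by Lp.induction
  rw [eq_top_iff]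
  intro f _
  refine Lp.induction (E := ℂ) (p := 2) (μ := μ) h2top (fun g => g ∈ S) ?_ ?_ ?_ f
  · intro c s hsm hμs
    rw [Lp.simpleFunc.coe_indicatorConst]
    have : indicatorConstLp 2 hsm hμs.ne c
        = c • indicatorConstLp 2 hsm hμs.ne (1 : ℂ) := by
      refine Lp.ext ?_
      filter_upwards [indicatorConstLp_coeFn (μ := μ) (p := 2) (hs := hsm) (hμs := hμs.ne)
          (c := c),
        Lp.coeFn_smul c (indicatorConstLp 2 hsm hμs.ne (1 : ℂ)),
        indicatorConstLp_coeFn (μ := μ) (p := 2) (hs := hsm) (hμs := hμs.ne) (c := (1 : ℂ))]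
        with x h1 h2 h3
      rw [h1, h2, Pi.smul_apply, h3]
      by_cases hx : x ∈ s <;> simp [Set.indicator, hx]
    rw [this]
    exact S.smul_mem c (hmeas s hsm)
  · intro g₁ g₂ hg₁ hg₂ _ h1 h2
    exact S.add_mem h1 h2
  · exact hSclosed
end

section
/- Let (X, 𝒜, μ) be a σ-finite measure space and let p be a bounded linear operator on the real Hilbert space L²(X, μ; ℝ). Suppose that p is an orthogonal projection (p∘p = p and ⟨p f, g⟩ = ⟨f, p g⟩ for all f, g), and that both p and 1−p are positive operators, i.e., they map the cone {f ∈ L²(μ) : f ≥ 0 μ-a.e.} into itself. Then there exists a measurable set B ∈ 𝒜 such that p is the multiplication operator by the indicator function of B, i.e., p f = χ_B · f (as elements of L²) for every f ∈ L²(X, μ; ℝ). Conversely, for every measurable B, multiplication by χ_B is an orthogonal projection p such that p and 1−p are positive. -/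
open MeasureTheory
open scoped ENNReal NNReal

-- existence of an a.e. positive L² function
lemma exists_pos_L2 {X : Type*} [MeasurableSpace X] (μ : Measure X) [SigmaFinite μ] :
    ∃ w : Lp ℝ 2 μ, ∀ᵐ x ∂μ, 0 < (w : X → ℝ) x := by
  obtain ⟨g, gpos, gmeas, gint⟩ :=
    exists_pos_lintegral_lt_of_sigmaFinite μ (ε := 1) one_ne_zero
  set w : X → ℝ := fun x => min (g x : ℝ) 1 with hw
  have hmeas : Measurable w := (gmeas.coe_nnreal_real).min measurable_const
  have hmem : MemLp w 2 μ := by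
    refine ⟨hmeas.aestronglyMeasurable, ?_⟩
    rw [eLpNorm_eq_lintegral_rpow_enorm_toReal (by norm_num) (by norm_num)]
    have hb : ∀ x, (‖w x‖₊ : ℝ≥0∞) ^ (2:ℝ≥0∞).toReal ≤ (g x : ℝ≥0∞) := by
      intro x
      have hw0 : (0:ℝ) ≤ w x := le_min (g x).coe_nonneg zero_le_one
      have h1 : (‖w x‖₊ : ℝ≥0∞) ≤ 1 := by
        rw [← enorm_eq_nnnorm, ← ofReal_norm, Real.norm_of_nonneg hw0]
        exact ENNReal.ofReal_le_one.2 (min_le_right _ _)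
      have h2 : (‖w x‖₊ : ℝ≥0∞) ≤ (g x : ℝ≥0∞) := by
        rw [← enorm_eq_nnnorm, ← ofReal_norm, Real.norm_of_nonneg hw0]
        refine le_trans (ENNReal.ofReal_le_ofReal (min_le_left _ _)) ?_
        simp [ENNReal.ofReal_coe_nnreal]
      calc (‖w x‖₊ : ℝ≥0∞) ^ (2:ℝ≥0∞).toReal ≤ (‖w x‖₊ : ℝ≥0∞) ^ (1:ℝ) :=
            ENNReal.rpow_le_rpow_of_exponent_ge h1 (by norm_num)
        _ = (‖w x‖₊ : ℝ≥0∞) := by simp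
        _ ≤ _ := h2
    calc (∫⁻ x, (‖w x‖₊ : ℝ≥0∞) ^ (2:ℝ≥0∞).toReal ∂μ) ^ (1 / (2:ℝ≥0∞).toReal)
        ≤ (∫⁻ x, (g x : ℝ≥0∞) ∂μ) ^ (1 / (2:ℝ≥0∞).toReal) := by
          gcongr with x
          exact hb x
      _ < ⊤ := ENNReal.rpow_lt_top_of_nonneg (by positivity) (gint.trans (by norm_num)).ne
  refine ⟨hmem.toLp w, ?_⟩
  filter_upwards [hmem.coeFn_toLp] with x hx
  rw [hx]
  exact lt_min (gpos x) one_pos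

-- orthogonal nonneg L² functions have a.e. zero product
lemma mul_ae_zero_of_inner_zero {X : Type*} [MeasurableSpace X] {μ : Measure X}
    (f g : Lp ℝ 2 μ) (hf : (0 : X → ℝ) ≤ᵐ[μ] f) (hg : (0 : X → ℝ) ≤ᵐ[μ] g)
    (h : inner (𝕜 := ℝ) f g = 0) : ∀ᵐ x ∂μ, (f : X → ℝ) x * (g : X → ℝ) x = 0 := by
  have hint : Integrable (fun x => (f : X → ℝ) x * (g : X → ℝ) x) μ := by
    have := L2.integrable_inner (𝕜 := ℝ) f g
    simpa [RCLike.inner_apply, mul_comm] using this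
  have h0 : ∫ x, (f : X → ℝ) x * (g : X → ℝ) x ∂μ = 0 := by
    rw [L2.inner_def] at h
    simpa [RCLike.inner_apply, mul_comm] using h
  have hnn : (0 : X → ℝ) ≤ᵐ[μ] fun x => (f : X → ℝ) x * (g : X → ℝ) x := by
    filter_upwards [hf, hg] with x h1 h2
    exact mul_nonneg h1 h2
  have := (integral_eq_zero_iff_of_nonneg_ae hnn hint).1 h0
  filter_upwards [this] with x hx using hx

theorem stmt6 {X : Type*} [MeasurableSpace X] (μ : Measure X) [SigmaFinite μ]
    (p : Lp ℝ 2 μ →L[ℝ] Lp ℝ 2 μ)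
    (hproj : ∀ f : Lp ℝ 2 μ, p (p f) = p f)
    (hsa : ∀ f g : Lp ℝ 2 μ, inner (𝕜 := ℝ) (p f) g = inner (𝕜 := ℝ) f (p g))
    (hpos : ∀ f : Lp ℝ 2 μ, (0 : X → ℝ) ≤ᵐ[μ] f → (0 : X → ℝ) ≤ᵐ[μ] (p f))
    (hpos' : ∀ f : Lp ℝ 2 μ, (0 : X → ℝ) ≤ᵐ[μ] f →
      (0 : X → ℝ) ≤ᵐ[μ] ((f - p f : Lp ℝ 2 μ) : X → ℝ)) :
    (∃ B : Set X, MeasurableSet B ∧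
      ∀ f : Lp ℝ 2 μ, (p f : X → ℝ) =ᵐ[μ]
        fun x => B.indicator (fun _ => (1 : ℝ)) x * f x) ∧
    (∀ B : Set X, MeasurableSet B →
      ∃ q : Lp ℝ 2 μ →L[ℝ] Lp ℝ 2 μ,
        (∀ f : Lp ℝ 2 μ, (q f : X → ℝ) =ᵐ[μ]
          fun x => B.indicator (fun _ => (1 : ℝ)) x * f x) ∧
        (∀ f : Lp ℝ 2 μ, q (q f) = q f) ∧
        (∀ f g : Lp ℝ 2 μ, inner (𝕜 := ℝ) (q f) g = inner (𝕜 := ℝ) f (q g)) ∧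
        (∀ f : Lp ℝ 2 μ, (0 : X → ℝ) ≤ᵐ[μ] f → (0 : X → ℝ) ≤ᵐ[μ] (q f)) ∧
        (∀ f : Lp ℝ 2 μ, (0 : X → ℝ) ≤ᵐ[μ] f →
          (0 : X → ℝ) ≤ᵐ[μ] ((f - q f : Lp ℝ 2 μ) : X → ℝ))) := by
  constructor
  · -- forward direction
    obtain ⟨w, hw⟩ := exists_pos_L2 μ
    set u : Lp ℝ 2 μ := p w with hu_def
    set v : Lp ℝ 2 μ := w - p w with hv_def
    have hu0 : (0 : X → ℝ) ≤ᵐ[μ] u := hpos w (hw.mono fun x h => h.le)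
    have hv0 : (0 : X → ℝ) ≤ᵐ[μ] v := hpos' w (hw.mono fun x h => h.le)
    have hpu : p u = u := hproj w
    have hpv : p v = 0 := by
      rw [hv_def, map_sub, hproj, sub_self]
    -- measurable representative of u
    set ut : X → ℝ := (Lp.aestronglyMeasurable u).mk u with hut_def
    have hut : (u : X → ℝ) =ᵐ[μ] ut := (Lp.aestronglyMeasurable u).ae_eq_mk
    have hutm : Measurable ut :=
      (Lp.aestronglyMeasurable u).stronglyMeasurable_mk.measurable
    refine ⟨{x | 0 < ut x}, measurableSet_lt measurable_const hutm, ?_⟩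
    have key : ∀ f : Lp ℝ 2 μ, (0 : X → ℝ) ≤ᵐ[μ] f →
        (p f : X → ℝ) =ᵐ[μ]
          fun x => ({x | 0 < ut x} : Set X).indicator (fun _ => (1 : ℝ)) x * f x := by
      intro f hf
      have h1 : ∀ᵐ x ∂μ, (p f : X → ℝ) x * (v : X → ℝ) x = 0 := by
        refine mul_ae_zero_of_inner_zero (p f) v (hpos f hf) hv0 ?_
        rw [hsa, hpv, inner_zero_right]
      have h2 : ∀ᵐ x ∂μ, ((f - p f : Lp ℝ 2 μ) : X → ℝ) x * (u : X → ℝ) x = 0 := by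
        refine mul_ae_zero_of_inner_zero _ u (hpos' f hf) hu0 ?_
        rw [← hpu, ← hsa, map_sub, hproj, sub_self, inner_zero_left]
      filter_upwards [h1, h2, hu0, hw, hut, Lp.coeFn_sub w (p w), Lp.coeFn_sub f (p f),
        hf] with x e1 e2 eu ew emk esubw esubf ef
      have hvx : (v : X → ℝ) x = (w : X → ℝ) x - (u : X → ℝ) x := by
        rw [hv_def, esubw]; rfl
      have hfx : ((f - p f : Lp ℝ 2 μ) : X → ℝ) x = (f : X → ℝ) x - (p f : X → ℝ) x := by
        rw [esubf]; rfl
      by_cases hx : 0 < ut x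
      · have hux : 0 < (u : X → ℝ) x := by rw [emk]; exact hx
        have : (f : X → ℝ) x - (p f : X → ℝ) x = 0 := by
          by_contra hne
          exact hne (by
            have := e2
            rw [hfx] at this
            rcases mul_eq_zero.1 this with h | h
            · exact h
            · exact absurd h (ne_of_gt hux))
        rw [Set.indicator_of_mem (show x ∈ {x | 0 < ut x} from hx), one_mul]
        linarith
      · have hux : (u : X → ℝ) x = 0 := by
          simp only [Pi.zero_apply] at eu
          rw [emk] at eu ⊢
          exact le_antisymm (not_lt.1 hx) eu
        have hvx' : 0 < (v : X → ℝ) x := by rw [hvx, hux, sub_zero]; exact ew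
        have : (p f : X → ℝ) x = 0 := by
          rcases mul_eq_zero.1 e1 with h | h
          · exact h
          · exact absurd h (ne_of_gt hvx')
        rw [Set.indicator_of_notMem (show x ∉ {x | 0 < ut x} from hx), zero_mul, this]
    -- extend to all f by decomposition into positive and negative parts
    intro f
    have hppos : (0 : X → ℝ) ≤ᵐ[μ] (Lp.posPart f : X → ℝ) := by
      filter_upwards [Lp.coeFn_posPart f] with x hx
      rw [hx]; exact le_max_right _ _
    have hnpos : (0 : X → ℝ) ≤ᵐ[μ] (Lp.negPart f : X → ℝ) := by
      filter_upwards [Lp.coeFn_negPart_eq_max f] with x hx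
      rw [hx]; exact le_max_right _ _
    have hsplit : Lp.posPart f - Lp.negPart f = f := by
      apply Lp.ext
      filter_upwards [Lp.coeFn_sub (Lp.posPart f) (Lp.negPart f), Lp.coeFn_posPart f,
        Lp.coeFn_negPart_eq_max f] with x h1 h2 h3
      rw [h1, Pi.sub_apply, h2, h3]
      rcases le_total ((f : X → ℝ) x) 0 with h | h
      · rw [max_eq_right h, max_eq_left (by linarith)]; ring
      · rw [max_eq_left h, max_eq_right (by linarith)]; ring
    have hp1 := key (Lp.posPart f) hppos
    have hp2 := key (Lp.negPart f) hnpos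
    have hmap : p f = p (Lp.posPart f) - p (Lp.negPart f) := by
      rw [← map_sub, hsplit]
    rw [hmap]
    filter_upwards [Lp.coeFn_sub (p (Lp.posPart f)) (p (Lp.negPart f)), hp1, hp2,
      Lp.coeFn_posPart f, Lp.coeFn_negPart_eq_max f] with x h1 h2 h3 h4 h5
    have h6 : (Lp.posPart f : X → ℝ) x - (Lp.negPart f : X → ℝ) x = (f : X → ℝ) x := by
      rw [h4, h5]
      rcases le_total ((f : X → ℝ) x) 0 with h | h
      · rw [max_eq_right h, max_eq_left (by linarith)]; ring
      · rw [max_eq_left h, max_eq_right (by linarith)]; ring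
    rw [h1, Pi.sub_apply, h2, h3]
    by_cases hx : x ∈ {x | 0 < ut x}
    · rw [Set.indicator_of_mem hx]
      simp only [one_mul]
      exact h6
    · rw [Set.indicator_of_notMem hx]
      ring
  · -- converse direction
    intro B hB
    have hmem : ∀ f : Lp ℝ 2 μ, MemLp (B.indicator (f : X → ℝ)) 2 μ := fun f =>
      MemLp.indicator hB (Lp.memLp f)
    set qlin : Lp ℝ 2 μ →ₗ[ℝ] Lp ℝ 2 μ :=
      { toFun := fun f => (hmem f).toLp _
        map_add' := by
          intro f g
          rw [← MemLp.toLp_add (hmem f) (hmem g)]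
          apply Lp.ext
          filter_upwards [MemLp.coeFn_toLp (hmem (f + g)),
            MemLp.coeFn_toLp ((hmem f).add (hmem g)), Lp.coeFn_add f g] with x h1 h2 h3
          rw [h1, h2, Pi.add_apply]
          by_cases hx : x ∈ B
          · simp only [Set.indicator_of_mem hx]
            rw [h3, Pi.add_apply]
          · simp only [Set.indicator_of_notMem hx, add_zero]
        map_smul' := by
          intro c f
          apply Lp.ext
          simp only [RingHom.id_apply]
          filter_upwards [MemLp.coeFn_toLp (hmem (c • f)),
            Lp.coeFn_smul c ((hmem f).toLp _), MemLp.coeFn_toLp (hmem f),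
            Lp.coeFn_smul c f] with x h1 h2 h3 h4
          rw [h1, h2, Pi.smul_apply, h3, smul_eq_mul]
          by_cases hx : x ∈ B
          · simp only [Set.indicator_of_mem hx]
            rw [h4, Pi.smul_apply, smul_eq_mul]
          · simp only [Set.indicator_of_notMem hx, mul_zero] } with hqlin_def
    have hqbound : ∀ f : Lp ℝ 2 μ, ‖qlin f‖ ≤ 1 * ‖f‖ := by
      intro f
      rw [one_mul]
      have h1 : ‖qlin f‖ = (eLpNorm (B.indicator (f : X → ℝ)) 2 μ).toReal :=
        Lp.norm_toLp (B.indicator (f : X → ℝ)) (hmem f)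
      rw [h1, Lp.norm_def]
      exact ENNReal.toReal_mono (Lp.eLpNorm_ne_top f) (eLpNorm_indicator_le _)
    set q : Lp ℝ 2 μ →L[ℝ] Lp ℝ 2 μ := qlin.mkContinuous 1 hqbound with hq_def
    have hq : ∀ f : Lp ℝ 2 μ, (q f : X → ℝ) =ᵐ[μ] B.indicator (f : X → ℝ) := fun f =>
      MemLp.coeFn_toLp (hmem f)
    have hqind : ∀ f : Lp ℝ 2 μ, (q f : X → ℝ) =ᵐ[μ]
        fun x => B.indicator (fun _ => (1 : ℝ)) x * (f : X → ℝ) x := by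
      intro f
      filter_upwards [hq f] with x hx
      rw [hx]
      by_cases hxB : x ∈ B
      · simp only [Set.indicator_of_mem hxB, one_mul]
      · simp only [Set.indicator_of_notMem hxB, zero_mul]
    refine ⟨q, hqind, ?_, ?_, ?_, ?_⟩
    · intro f
      apply Lp.ext
      filter_upwards [hq (q f), hq f] with x h1 h2
      rw [h1]
      by_cases hxB : x ∈ B
      · simp only [Set.indicator_of_mem hxB]
      · rw [Set.indicator_of_notMem hxB, h2, Set.indicator_of_notMem hxB]
    · intro f g
      rw [L2.inner_def, L2.inner_def]
      apply integral_congr_ae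
      filter_upwards [hq f, hq g] with x h1 h2
      simp only [RCLike.inner_apply, conj_trivial, h1, h2]
      by_cases hxB : x ∈ B
      · simp only [Set.indicator_of_mem hxB]
      · simp only [Set.indicator_of_notMem hxB, zero_mul, mul_zero]
    · intro f hf
      filter_upwards [hq f, hf] with x h1 h2
      simp only [Pi.zero_apply] at h2 ⊢
      rw [h1]
      by_cases hxB : x ∈ B
      · rw [Set.indicator_of_mem hxB]; exact h2
      · rw [Set.indicator_of_notMem hxB]
    · intro f hf
      filter_upwards [Lp.coeFn_sub f (q f), hq f, hf] with x h1 h2 h3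
      simp only [Pi.zero_apply] at h3 ⊢
      rw [h1, Pi.sub_apply, h2]
      by_cases hxB : x ∈ B
      · rw [Set.indicator_of_mem hxB, sub_self]
      · rw [Set.indicator_of_notMem hxB, sub_zero]; exact h3
end
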